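/- Resolving safety: let player 2 play blueprint σ_2, and let σ^S be a Nash equilibrium of the re-solve augmented game in which player 1 at each root infoset I_1 chooses between a terminal alternative payoff equal to CBV^{σ_2}(I_1) and entering the subgame S. Then the strategy σ'_2 that follows σ_2 outside S and σ^S_2 inside S satisfies: player 1's best-response value against σ'_2 at each root infoset of S is at most CBV^{σ_2}(I_1); consequently exp(σ'_2) ≤ exp(σ_2). -/
import Mathlib


/-- **Resolving safety.** Abstract model of subgame Resolving: `ι` indexes the root
infosets of the subgame `S`; `w I > 0` is the chance weight `∑_{h∈I} π^σ_{-1}(h)`;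
`cbvBlue I = CBV^{σ₂}(I)` is the alternative payoff; `v τ I` is player 1's
best-response value for entering `S` at `I` when player 2 plays the subgame
strategy `τ`; the blueprint restriction `blue` satisfies `v blue I = cbvBlue I`.
The augmented-game value (with player 1 best responding) is
`AU τ = ∑ I, w I * max (CBV^{σ₂}(I)) (v τ I)`, and `σS` is a Nash equilibrium of
the augmented game, i.e. it minimizes `AU`. `fullBR` gives player 1's
best-response value of the full game as a monotone function of the entering
values, and `gv` is the game value, so `fullBR f - gv` is the exploitability of
the combined strategy with entering values `f`. Conclusion: player 1's
best-response value against `σ'₂` at each root infoset is at most `CBV^{σ₂}(I)`,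
and consequently `exp(σ'₂) ≤ exp(σ₂)`. -/
theorem resolving_safety
    {ι : Type*} [Fintype ι] {SubStrat : Type*}
    (w : ι → ℝ) (hw : ∀ I, 0 < w I)
    (cbvBlue : ι → ℝ)
    (v : SubStrat → ι → ℝ)
    (blue : SubStrat) (hblue : ∀ I, v blue I = cbvBlue I)
    (AU : SubStrat → ℝ)
    (hAU : ∀ τ, AU τ = ∑ I, w I * max (cbvBlue I) (v τ I))
    (σS : SubStrat) (hNash : ∀ τ, AU σS ≤ AU τ)
    (fullBR : (ι → ℝ) → ℝ)
    (hmono : ∀ f g : ι → ℝ, (∀ I, f I ≤ g I) → fullBR f ≤ fullBR g)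
    (gv : ℝ) :
    (∀ I, v σS I ≤ cbvBlue I) ∧
    fullBR (v σS) - gv ≤ fullBR (fun I => cbvBlue I) - gv := by
  have hle : AU σS ≤ ∑ I, w I * cbvBlue I := by
    have := hNash blue
    rwa [hAU blue, show (∑ I, w I * max (cbvBlue I) (v blue I)) = ∑ I, w I * cbvBlue I
      from Finset.sum_congr rfl (fun I _ => by rw [hblue, max_self])] at this
  have key : ∀ I, v σS I ≤ cbvBlue I := by
    intro I0
    by_contra h
    push_neg at h
    have hlt : ∑ I, w I * cbvBlue I < ∑ I, w I * max (cbvBlue I) (v σS I) := by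
      apply Finset.sum_lt_sum (fun I _ => by
        exact mul_le_mul_of_nonneg_left (le_max_left _ _) (hw I).le)
      exact ⟨I0, Finset.mem_univ _, by
        have : cbvBlue I0 < max (cbvBlue I0) (v σS I0) := lt_max_of_lt_right h
        exact mul_lt_mul_of_pos_left this (hw I0)⟩
    rw [← hAU σS] at hlt
    exact absurd hle (not_le.mpr hlt)
  exact ⟨key, by simpa using sub_le_sub_right (hmono _ _ key) gv⟩
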